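/- arXiv:math/0408283 — 2 statements merged into one kernel-verified Lean document; each statement's English description precedes it below -/
import Mathlib

section
/- Every point of the Segre cubic {Σxi = 0, Σxi^3 = 0} ⊂ P^5 at which the partial derivatives of Σxi^3 are proportional to (1,...,1) is, up to scaling and permutation of coordinates, the point (1,1,1,−1,−1,−1); hence the Segre cubic has exactly 10 singular points. -/
open Classical

set_option linter.unusedSectionVars false

section SegreAux

variable {k : Type*} [Field k] [CharZero k]

private def segreVec (k : Type*) [Field k] (S : Finset (Fin 6)) : Fin 6 → k :=
  fun i => if i ∈ S then 1 else -1

private lemma segreVec_ne_zero (S : Finset (Fin 6)) : segreVec k S ≠ 0 := by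
  intro h
  have := congrFun h 0
  by_cases h0 : (0 : Fin 6) ∈ S <;> simp [segreVec, h0] at this

private lemma segreVec_sq (S : Finset (Fin 6)) (i : Fin 6) : (segreVec k S i) ^ 2 = 1 := by
  unfold segreVec; split <;> norm_num

private lemma segreVec_cube (S : Finset (Fin 6)) (i : Fin 6) :
    (segreVec k S i) ^ 3 = segreVec k S i := by
  unfold segreVec; split <;> norm_num

private lemma sum_segreVec (S : Finset (Fin 6)) (hS : S.card = 3) :
    ∑ i, segreVec k S i = 0 := by
  rw [← Finset.sum_add_sum_compl S]
  have h1 : ∑ i ∈ S, segreVec k S i = 3 := by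
    have e : ∑ i ∈ S, segreVec k S i = ∑ _i ∈ S, (1 : k) :=
      Finset.sum_congr rfl (fun i hi => if_pos hi)
    rw [e, Finset.sum_const, hS]; norm_num
  have h2 : ∑ i ∈ Sᶜ, segreVec k S i = -3 := by
    have e : ∑ i ∈ Sᶜ, segreVec k S i = ∑ _i ∈ Sᶜ, (-1 : k) :=
      Finset.sum_congr rfl (fun i hi => if_neg (Finset.mem_compl.mp hi))
    rw [e, Finset.sum_const, Finset.card_compl, hS]; norm_num
  rw [h1, h2]; ring

private lemma segre_classify (x : Fin 6 → k) (hx : x ≠ 0) (h1 : ∑ i, x i = 0)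
    (hc : ∃ c : k, ∀ i, 3 * (x i) ^ 2 = c) :
    ∃ t : k, t ≠ 0 ∧ ∃ S : Finset (Fin 6), S.card = 3 ∧
      ∀ i, x i = if i ∈ S then t else -t := by
  classical
  obtain ⟨c, hc⟩ := hc
  set t := x 0 with ht
  have hsq : ∀ i, x i = t ∨ x i = -t := by
    intro i
    have h : (x i - t) * (x i + t) = 0 := by
      linear_combination (hc i - hc 0) / 3
    rcases mul_eq_zero.mp h with h | h
    · exact Or.inl (sub_eq_zero.mp h)
    · exact Or.inr (eq_neg_of_add_eq_zero_left h)
  have htne : t ≠ 0 := by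
    intro h0
    apply hx
    funext i
    rcases hsq i with h | h <;> simp [h, h0]
  set S : Finset (Fin 6) := Finset.univ.filter (fun i => x i = t) with hSdef
  have hxS : ∀ i, x i = if i ∈ S then t else -t := by
    intro i
    by_cases hi : i ∈ S
    · rw [if_pos hi]; exact (Finset.mem_filter.mp hi).2
    · rw [if_neg hi]
      rcases hsq i with h | h
      · exact absurd (Finset.mem_filter.mpr ⟨Finset.mem_univ i, h⟩) hi
      · exact h
  refine ⟨t, htne, S, ?_, hxS⟩
  have hsum : (0 : k) = (S.card : k) * t + (Sᶜ.card : k) * (-t) := by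
    rw [← h1, Finset.sum_congr rfl (fun i _ => hxS i), Finset.sum_ite,
      Finset.sum_const, Finset.sum_const]
    have e1 : Finset.univ.filter (fun i => i ∈ S) = S := by
      ext i; simp
    have e2 : Finset.univ.filter (fun i => ¬ i ∈ S) = Sᶜ := by
      ext i; simp
    rw [e1, e2, nsmul_eq_mul, nsmul_eq_mul]
  have hcards : S.card + Sᶜ.card = 6 := by
    rw [Finset.card_add_card_compl]; simp
  have : ((S.card : k) - (Sᶜ.card : k)) * t = 0 := by linear_combination -hsum
  rcases mul_eq_zero.mp this with h | h
  · have : (S.card : k) = (Sᶜ.card : k) := by linear_combination h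
    have := Nat.cast_inj.mp this
    omega
  · exact absurd h htne

end SegreAux

/-- Every singular point of the Segre cubic `{Σ xᵢ = 0, Σ xᵢ³ = 0} ⊂ P^5`
(i.e. a point where the gradient of `Σ xᵢ³` is proportional to `(1,…,1)`) is,
up to scaling and permutation of coordinates, `(1,1,1,−1,−1,−1)`; hence the
Segre cubic has exactly 10 singular points. -/
theorem segre_cubic_ten_singular_points {k : Type*} [Field k] [IsAlgClosed k]
    [CharZero k] :
    (∀ x : Fin 6 → k, x ≠ 0 → ∑ i, x i = 0 → ∑ i, (x i) ^ 3 = 0 →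
      (∃ c : k, ∀ i, 3 * (x i) ^ 2 = c) →
      ∃ t : k, t ≠ 0 ∧ ∃ σ : Equiv.Perm (Fin 6),
        ∀ i, x i = t * (![1, 1, 1, -1, -1, -1] : Fin 6 → k) (σ i)) ∧
    {p : Projectivization k (Fin 6 → k) |
      ∃ (x : Fin 6 → k) (hx : x ≠ 0), p = Projectivization.mk k x hx ∧
        ∑ i, x i = 0 ∧ ∑ i, (x i) ^ 3 = 0 ∧
        ∃ c : k, ∀ i, 3 * (x i) ^ 2 = c}.ncard = 10 := by
  have hvec : ∀ j : Fin 6, (![1, 1, 1, -1, -1, -1] : Fin 6 → k) j =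
      if j ∈ ({0, 1, 2} : Finset (Fin 6)) then 1 else -1 := by
    intro j; fin_cases j <;> (simp [Matrix.cons_val_succ]; try rfl)
  constructor
  · -- classification part
    intro x hx h1 h3 hc
    obtain ⟨t, ht, S, hS, hxS⟩ := segre_classify x hx h1 hc
    set A : Finset (Fin 6) := {0, 1, 2} with hAdef
    have hcard : S.card = A.card := by rw [hS]; decide
    have hcard' : Sᶜ.card = Aᶜ.card := by
      rw [Finset.card_compl, Finset.card_compl, hcard]
    let eS : {i // i ∈ S} ≃ {i // i ∈ A} := Finset.equivOfCardEq hcard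
    let eC : {i // ¬ i ∈ S} ≃ {i // ¬ i ∈ A} :=
      (Equiv.subtypeEquivRight (fun i => (Finset.mem_compl (s := S)).symm)).trans
        ((Finset.equivOfCardEq hcard').trans
          (Equiv.subtypeEquivRight (fun i => Finset.mem_compl)))
    let σ : Equiv.Perm (Fin 6) :=
      (Equiv.sumCompl (· ∈ S)).symm.trans
        ((Equiv.sumCongr eS eC).trans (Equiv.sumCompl (· ∈ A)))
    have hσ : ∀ i, (σ i ∈ A ↔ i ∈ S) := by
      intro i
      by_cases hi : i ∈ S
      · have h1 : ((Equiv.sumCompl (· ∈ S)).symm i) = Sum.inl ⟨i, hi⟩ :=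
          Equiv.sumCompl_symm_apply_of_pos hi
        have : σ i = ↑(eS ⟨i, hi⟩) := by
          simp only [σ, Equiv.trans_apply, h1, Equiv.sumCongr_apply, Sum.map_inl,
            Equiv.sumCompl_apply_inl]
        rw [this]
        exact iff_of_true (eS ⟨i, hi⟩).2 hi
      · have h1 : ((Equiv.sumCompl (· ∈ S)).symm i) = Sum.inr ⟨i, hi⟩ :=
          Equiv.sumCompl_symm_apply_of_neg hi
        have : σ i = ↑(eC ⟨i, hi⟩) := by
          simp only [σ, Equiv.trans_apply, h1, Equiv.sumCongr_apply, Sum.map_inr,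
            Equiv.sumCompl_apply_inr]
        rw [this]
        exact iff_of_false (eC ⟨i, hi⟩).2 hi
    refine ⟨t, ht, σ, fun i => ?_⟩
    rw [hxS i, hvec (σ i)]
    by_cases hi : i ∈ S
    · rw [if_pos hi, if_pos ((hσ i).mpr hi), mul_one]
    · rw [if_neg hi, if_neg (fun h => hi ((hσ i).mp h))]
      ring
  · -- counting part
    have hset : {p : Projectivization k (Fin 6 → k) |
        ∃ (x : Fin 6 → k) (hx : x ≠ 0), p = Projectivization.mk k x hx ∧
          ∑ i, x i = 0 ∧ ∑ i, (x i) ^ 3 = 0 ∧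
          ∃ c : k, ∀ i, 3 * (x i) ^ 2 = c} =
        (fun S : Finset (Fin 6) =>
          Projectivization.mk k (segreVec k S) (segreVec_ne_zero S)) ''
          {S : Finset (Fin 6) | S.card = 3 ∧ (0 : Fin 6) ∈ S} := by
      ext p
      constructor
      · rintro ⟨x, hx, rfl, h1, h3, hc⟩
        obtain ⟨t, ht, S, hS, hxS⟩ := segre_classify x hx h1 hc
        by_cases h0 : (0 : Fin 6) ∈ S
        · refine ⟨S, ⟨hS, h0⟩, ?_⟩
          symm
          rw [Projectivization.mk_eq_mk_iff]
          refine ⟨Units.mk0 t ht, funext fun i => ?_⟩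
          simp only [Units.smul_def, Units.val_mk0, Pi.smul_apply, smul_eq_mul,
            segreVec, hxS i]
          split <;> ring
        · refine ⟨Sᶜ, ⟨by rw [Finset.card_compl, hS]; simp,
            Finset.mem_compl.mpr h0⟩, ?_⟩
          symm
          rw [Projectivization.mk_eq_mk_iff]
          refine ⟨Units.mk0 (-t) (neg_ne_zero.mpr ht), funext fun i => ?_⟩
          simp only [Units.smul_def, Units.val_mk0, Pi.smul_apply, smul_eq_mul,
            segreVec, Finset.mem_compl, hxS i]
          by_cases hi : i ∈ S <;> simp [hi]
      · rintro ⟨S, ⟨hS3, hS0⟩, rfl⟩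
        refine ⟨segreVec k S, segreVec_ne_zero S, rfl, sum_segreVec S hS3, ?_, 3, fun i => ?_⟩
        · rw [Finset.sum_congr rfl (fun i _ => segreVec_cube S i)]
          exact sum_segreVec S hS3
        · rw [segreVec_sq]; ring
    rw [hset]
    have hinj : Set.InjOn (fun S : Finset (Fin 6) =>
        Projectivization.mk k (segreVec k S) (segreVec_ne_zero S))
        {S : Finset (Fin 6) | S.card = 3 ∧ (0 : Fin 6) ∈ S} := by
      rintro S ⟨_, hS0⟩ T ⟨_, hT0⟩ h
      rw [Projectivization.mk_eq_mk_iff] at h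
      obtain ⟨a, ha⟩ := h
      have h0 := congrFun ha 0
      simp only [Units.smul_def, Pi.smul_apply, smul_eq_mul, segreVec,
        if_pos hS0, if_pos hT0, mul_one] at h0
      ext i
      have hi := congrFun ha i
      simp only [Units.smul_def, Pi.smul_apply, smul_eq_mul, segreVec, h0, one_mul] at hi
      constructor
      · intro hiS
        by_contra hiT
        rw [if_neg hiT, if_pos hiS] at hi
        norm_num at hi
      · intro hiT
        by_contra hiS
        rw [if_pos hiT, if_neg hiS] at hi
        norm_num at hi
    rw [Set.ncard_image_of_injOn hinj]
    have : {S : Finset (Fin 6) | S.card = 3 ∧ (0 : Fin 6) ∈ S} =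
        ↑((Finset.univ : Finset (Finset (Fin 6))).filter
          (fun S => S.card = 3 ∧ (0 : Fin 6) ∈ S)) := by
      ext S; simp
    rw [this, Set.ncard_coe_finset]
    decide
end

section
/- The total number of double-sixes in the Schläfli graph of 27 lines is 36: one of the form (a_1...a_6; b_1...b_6), fifteen of the form (a_i, b_i, c_{kl}, c_{km}, c_{kn}, c_{kp}; a_k, b_k, c_{il}, c_{im}, c_{in}, c_{ip}) for pairs {i,k}, and twenty of the form (a_i, a_k, a_l, c_{mn}, c_{mp}, c_{np}; c_{kl}, c_{il}, c_{ik}, b_p, b_n, b_m) for 3-element subsets {i,k,l}. -/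
/-- The 27 lines on a cubic surface in Schläfli's notation:
`a i` and `b i` for `i ∈ Fin 6`, and `c s` for a 2-element subset `s` of
`Fin 6` (the line `c_{ij}` with `s = {i,j}`). -/
abbrev Line27 : Type := Fin 6 ⊕ Fin 6 ⊕ {s : Finset (Fin 6) // s.card = 2}

/-- The Schläfli incidence relation on the 27 lines:
`a_i` meets `b_j` iff `i ≠ j`; `a_i` (resp. `b_i`) meets `c_{jk}` iff
`i ∈ {j,k}`; `c_{ij}` meets `c_{kl}` iff `{i,j} ∩ {k,l} = ∅`; no two `a`'s and
no two `b`'s meet. -/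
def adj27 : Line27 → Line27 → Prop
  | Sum.inl i, Sum.inr (Sum.inl j) => i ≠ j
  | Sum.inr (Sum.inl i), Sum.inl j => i ≠ j
  | Sum.inl i, Sum.inr (Sum.inr s) => i ∈ s.1
  | Sum.inr (Sum.inr s), Sum.inl i => i ∈ s.1
  | Sum.inr (Sum.inl i), Sum.inr (Sum.inr s) => i ∈ s.1
  | Sum.inr (Sum.inr s), Sum.inr (Sum.inl i) => i ∈ s.1
  | Sum.inr (Sum.inr s), Sum.inr (Sum.inr t) => s.1 ∩ t.1 = ∅
  | _, _ => False

/-- The intersection graph of the 27 lines on a smooth cubic surface. -/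
def schlafliGraph : SimpleGraph Line27 where
  Adj := adj27
  symm := by
    constructor
    rintro (i | i | s) (j | j | t) h <;> simp_all [adj27]
    · exact Ne.symm h
    · exact Ne.symm h
    · rw [Finset.inter_comm]; exact h
  loopless := by
    constructor
    rintro (i | i | s) h <;> simp_all [adj27]
    have : s.1.Nonempty := Finset.card_pos.mp (by simp [s.2])
    exact absurd h (Finset.nonempty_iff_ne_empty.mp (by simpa using this))

/-- A double-six: a pair of disjoint 6-element independent sets of lines such
that the bipartite adjacency between them is the complement of a perfect
matching (given by a bijection `φ`): `s` meets `t` iff `t ≠ φ s`. -/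
def IsDoubleSix (S T : Finset Line27) : Prop :=
  S.card = 6 ∧ T.card = 6 ∧ Disjoint S T ∧
    (∀ u ∈ S, ∀ v ∈ S, ¬ schlafliGraph.Adj u v) ∧
    (∀ u ∈ T, ∀ v ∈ T, ¬ schlafliGraph.Adj u v) ∧
    ∃ φ : Line27 → Line27, Set.BijOn φ (S : Set Line27) (T : Set Line27) ∧
      ∀ u ∈ S, ∀ v ∈ T, (schlafliGraph.Adj u v ↔ v ≠ φ u)

/-! ### Auxiliary machinery -/

instance decAdj27 : DecidableRel adj27
  | Sum.inl _, Sum.inl _ => isFalse id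
  | Sum.inl i, Sum.inr (Sum.inl j) => inferInstanceAs (Decidable (i ≠ j))
  | Sum.inr (Sum.inl i), Sum.inl j => inferInstanceAs (Decidable (i ≠ j))
  | Sum.inl i, Sum.inr (Sum.inr s) => inferInstanceAs (Decidable (i ∈ s.1))
  | Sum.inr (Sum.inr s), Sum.inl i => inferInstanceAs (Decidable (i ∈ s.1))
  | Sum.inr (Sum.inl i), Sum.inr (Sum.inr s) => inferInstanceAs (Decidable (i ∈ s.1))
  | Sum.inr (Sum.inr s), Sum.inr (Sum.inl i) => inferInstanceAs (Decidable (i ∈ s.1))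
  | Sum.inr (Sum.inl _), Sum.inr (Sum.inl _) => isFalse id
  | Sum.inr (Sum.inr s), Sum.inr (Sum.inr t) => inferInstanceAs (Decidable (s.1 ∩ t.1 = ∅))

def allLines : List Line27 := [Sum.inl 0,
  Sum.inl 1, Sum.inl 2, Sum.inl 3, Sum.inl 4, Sum.inl 5,
  Sum.inr (Sum.inl 0), Sum.inr (Sum.inl 1), Sum.inr (Sum.inl 2),
  Sum.inr (Sum.inl 3), Sum.inr (Sum.inl 4), Sum.inr (Sum.inl 5),
  Sum.inr (Sum.inr ⟨{0,1}, by decide⟩),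
  Sum.inr (Sum.inr ⟨{0,2}, by decide⟩),
  Sum.inr (Sum.inr ⟨{0,3}, by decide⟩),
  Sum.inr (Sum.inr ⟨{0,4}, by decide⟩),
  Sum.inr (Sum.inr ⟨{0,5}, by decide⟩),
  Sum.inr (Sum.inr ⟨{1,2}, by decide⟩),
  Sum.inr (Sum.inr ⟨{1,3}, by decide⟩),
  Sum.inr (Sum.inr ⟨{1,4}, by decide⟩),
  Sum.inr (Sum.inr ⟨{1,5}, by decide⟩),
  Sum.inr (Sum.inr ⟨{2,3}, by decide⟩),
  Sum.inr (Sum.inr ⟨{2,4}, by decide⟩),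
  Sum.inr (Sum.inr ⟨{2,5}, by decide⟩),
  Sum.inr (Sum.inr ⟨{3,4}, by decide⟩),
  Sum.inr (Sum.inr ⟨{3,5}, by decide⟩),
  Sum.inr (Sum.inr ⟨{4,5}, by decide⟩)]

def lineIdx (x : Line27) : Fin 27 := ⟨(allLines.idxOf x) % 27, Nat.mod_lt _ (by norm_num)⟩

def lineOf (i : Fin 27) : Line27 := allLines.getD i.val (Sum.inl 0)

set_option maxRecDepth 10000 in
def lineEquiv : Line27 ≃ Fin 27 where
  toFun := lineIdx
  invFun := lineOf
  left_inv := by decide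
  right_inv := by decide

def nbrTable : List Nat := [130944, 1974080, 14823104, 52710848, 88640448,
  110168000, 127038, 1970237, 14819387, 52707383, 88637487, 110166047,
  132120771, 119275845, 81396297, 45483089, 23988321, 117555590, 79798922,
  44131474, 23128226, 68784908, 34952468, 17619236, 9647640, 4897320, 2522160]

def adjF (i j : Fin 27) : Bool := (nbrTable.getD i.val 0).testBit j.val

set_option maxRecDepth 10000 in
lemma adj_iff_adjF : ∀ x y : Line27, adj27 x y ↔ adjF (lineEquiv x) (lineEquiv y) = true := by
  decide

lemma not_adj_iff_adjF (x y : Line27) :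
    ¬ adj27 x y ↔ adjF (lineEquiv x) (lineEquiv y) = false := by
  rw [adj_iff_adjF]
  cases adjF (lineEquiv x) (lineEquiv y) <;> simp

/-- Decidable reformulation of `IsDoubleSix` on the `Line27` side. -/
def DS (S T : Finset Line27) : Prop :=
  S.card = 6 ∧ T.card = 6 ∧ Disjoint S T ∧
    (∀ u ∈ S, ∀ v ∈ S, ¬ adj27 u v) ∧
    (∀ u ∈ T, ∀ v ∈ T, ¬ adj27 u v) ∧
    (∀ u ∈ S, (T.filter fun v => ¬ adj27 u v).card = 1) ∧
    (∀ v ∈ T, (S.filter fun u => ¬ adj27 u v).card = 1)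

/-- The mirror of `DS` on the `Fin 27` side. -/
def DSF (A B : Finset (Fin 27)) : Prop :=
  A.card = 6 ∧ B.card = 6 ∧ Disjoint A B ∧
    (∀ u ∈ A, ∀ v ∈ A, adjF u v = false) ∧
    (∀ u ∈ B, ∀ v ∈ B, adjF u v = false) ∧
    (∀ u ∈ A, (B.filter fun v => adjF u v = false).card = 1) ∧
    (∀ v ∈ B, (A.filter fun u => adjF u v = false).card = 1)

instance decDSF : ∀ A B, Decidable (DSF A B) := fun A B => by
  unfold DSF; infer_instance

lemma filter_card_one_iff {α : Type*} {s : Finset α} {p : α → Prop} [DecidablePred p] :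
    (s.filter p).card = 1 ↔ ∃! a, a ∈ s ∧ p a := by
  constructor
  · intro h
    obtain ⟨a, ha⟩ := Finset.card_eq_one.mp h
    have hmem : ∀ v, (v ∈ s ∧ p v) ↔ v = a := by
      intro v
      rw [← Finset.mem_singleton, ← ha, Finset.mem_filter]
    exact ⟨a, (hmem a).mpr rfl, fun v hv => (hmem v).mp hv⟩
  · rintro ⟨a, ⟨haS, hap⟩, hu⟩
    rw [Finset.card_eq_one]
    refine ⟨a, ?_⟩
    ext v
    simp only [Finset.mem_filter, Finset.mem_singleton]
    constructor
    · intro hv; exact hu v hv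
    · rintro rfl; exact ⟨haS, hap⟩

lemma isDoubleSix_iff_DS (S T : Finset Line27) : IsDoubleSix S T ↔ DS S T := by
  constructor
  · rintro ⟨h1, h2, h3, h4, h5, φ, ⟨hmap, hinj, hsur⟩, hiff⟩
    refine ⟨h1, h2, h3, h4, h5, ?_, ?_⟩
    · intro u hu
      have hφT : φ u ∈ T := hmap hu
      rw [filter_card_one_iff]
      refine ⟨φ u, ⟨hφT, fun hadj => (hiff u hu _ hφT).mp hadj rfl⟩, ?_⟩
      rintro v ⟨hvT, hnadj⟩
      by_contra hne
      exact hnadj ((hiff u hu v hvT).mpr hne)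
    · intro v hv
      obtain ⟨u, hu, rfl⟩ := hsur hv
      have hu' : u ∈ S := hu
      rw [filter_card_one_iff]
      refine ⟨u, ⟨hu', fun hadj => (hiff u hu' _ (hmap hu)).mp hadj rfl⟩, ?_⟩
      rintro w ⟨hwS, hnadj⟩
      have hfe : φ u = φ w := by
        by_contra hne
        exact hnadj ((hiff w hwS (φ u) (hmap hu)).mpr hne)
      exact hinj hwS hu' hfe.symm
  · rintro ⟨h1, h2, h3, h4, h5, h6, h7⟩
    classical
    refine ⟨h1, h2, h3, h4, h5, ?_⟩
    have exu : ∀ u ∈ S, ∃! v, v ∈ T ∧ ¬ adj27 u v := by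
      intro u hu
      exact filter_card_one_iff.mp (h6 u hu)
    set φ : Line27 → Line27 :=
      fun u => if h : ∃ v, v ∈ T ∧ ¬ adj27 u v then h.choose else u with hφdef
    have hφ : ∀ u ∈ S, (φ u ∈ T ∧ ¬ adj27 u (φ u)) ∧
        ∀ v, v ∈ T → ¬ adj27 u v → v = φ u := by
      intro u hu
      have h := exu u hu
      have hex : ∃ v, v ∈ T ∧ ¬ adj27 u v := h.exists
      have hval : φ u = hex.choose := by
        simp only [hφdef]
        rw [dif_pos hex]
      have hspec := hex.choose_spec
      obtain ⟨a, ha, hq⟩ := h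
      refine ⟨by rw [hval]; exact hspec, ?_⟩
      intro v hvT hnadj
      rw [hval, hq v ⟨hvT, hnadj⟩, hq hex.choose hspec]
    refine ⟨φ, ⟨?_, ?_, ?_⟩, ?_⟩
    · intro u hu
      exact (hφ u hu).1.1
    · intro u hu u' hu' heq
      have m1 : u ∈ S.filter (fun x => ¬ adj27 x (φ u)) :=
        Finset.mem_filter.mpr ⟨hu, (hφ u hu).1.2⟩
      have m2 : u' ∈ S.filter (fun x => ¬ adj27 x (φ u)) := by
        refine Finset.mem_filter.mpr ⟨hu', ?_⟩
        rw [heq]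
        exact (hφ u' hu').1.2
      obtain ⟨a, ha⟩ := Finset.card_eq_one.mp (h7 (φ u) ((hφ u hu).1.1))
      rw [ha, Finset.mem_singleton] at m1 m2
      exact m1.trans m2.symm
    · intro v hv
      have hv' : v ∈ T := hv
      obtain ⟨a, ha⟩ := Finset.card_eq_one.mp (h7 v hv')
      have haf : a ∈ S.filter (fun u => ¬ adj27 u v) := by
        rw [ha]; exact Finset.mem_singleton_self a
      rw [Finset.mem_filter] at haf
      have hva : v = φ a := (hφ a haf.1).2 v hv' haf.2
      exact ⟨a, haf.1, hva.symm⟩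
    · intro u hu v hv
      constructor
      · intro hadj heq
        rw [heq] at hadj
        exact (hφ u hu).1.2 hadj
      · intro hne
        by_contra hnadj
        exact hne ((hφ u hu).2 v hv hnadj)

/-! ### Transport to `Fin 27` -/

abbrev eEmb : Line27 ↪ Fin 27 := lineEquiv.toEmbedding
abbrev eEmb' : Fin 27 ↪ Line27 := lineEquiv.symm.toEmbedding

lemma eEmb_apply (x : Line27) : eEmb x = lineEquiv x := rfl
lemma eEmb'_apply (i : Fin 27) : eEmb' i = lineEquiv.symm i := rfl

lemma map_map_eq (S : Finset Line27) : (S.map eEmb).map eEmb' = S := by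
  rw [Finset.map_map]
  have h : eEmb.trans eEmb' = Function.Embedding.refl _ :=
    Function.Embedding.ext fun x => lineEquiv.symm_apply_apply x
  rw [h, Finset.map_refl]

lemma map_map_eq' (A : Finset (Fin 27)) : (A.map eEmb').map eEmb = A := by
  rw [Finset.map_map]
  have h : eEmb'.trans eEmb = Function.Embedding.refl _ :=
    Function.Embedding.ext fun x => lineEquiv.apply_symm_apply x
  rw [h, Finset.map_refl]

lemma DS_iff_DSF (S T : Finset Line27) : DS S T ↔ DSF (S.map eEmb) (T.map eEmb) := by
  have hcardfilter : ∀ (U : Finset Line27) (u : Line27),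
      ((U.map eEmb).filter fun v => adjF (eEmb u) v = false).card
        = (U.filter fun v => ¬ adj27 u v).card := by
    intro U u
    rw [Finset.filter_map, Finset.card_map]
    congr 1
    apply Finset.filter_congr
    intro x _
    simp only [Function.comp, eEmb_apply]
    exact (not_adj_iff_adjF u x).symm
  have hcardfilter' : ∀ (U : Finset Line27) (v : Line27),
      ((U.map eEmb).filter fun u => adjF u (eEmb v) = false).card
        = (U.filter fun u => ¬ adj27 u v).card := by
    intro U v
    rw [Finset.filter_map, Finset.card_map]
    congr 1
    apply Finset.filter_congr
    intro x _
    simp only [Function.comp, eEmb_apply]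
    exact (not_adj_iff_adjF x v).symm
  constructor
  · rintro ⟨h1, h2, h3, h4, h5, h6, h7⟩
    refine ⟨by simpa using h1, by simpa using h2, by simpa using h3, ?_, ?_, ?_, ?_⟩
    · rintro u' hu' v' hv'
      obtain ⟨u, hu, rfl⟩ := Finset.mem_map.mp hu'
      obtain ⟨v, hv, rfl⟩ := Finset.mem_map.mp hv'
      exact (not_adj_iff_adjF u v).mp (h4 u hu v hv)
    · rintro u' hu' v' hv'
      obtain ⟨u, hu, rfl⟩ := Finset.mem_map.mp hu'
      obtain ⟨v, hv, rfl⟩ := Finset.mem_map.mp hv'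
      exact (not_adj_iff_adjF u v).mp (h5 u hu v hv)
    · rintro u' hu'
      obtain ⟨u, hu, rfl⟩ := Finset.mem_map.mp hu'
      rw [hcardfilter T u]
      exact h6 u hu
    · rintro v' hv'
      obtain ⟨v, hv, rfl⟩ := Finset.mem_map.mp hv'
      rw [hcardfilter' S v]
      exact h7 v hv
  · rintro ⟨h1, h2, h3, h4, h5, h6, h7⟩
    refine ⟨by simpa using h1, by simpa using h2, by simpa using h3, ?_, ?_, ?_, ?_⟩
    · intro u hu v hv
      exact (not_adj_iff_adjF u v).mpr
        (h4 _ (Finset.mem_map_of_mem _ hu) _ (Finset.mem_map_of_mem _ hv))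
    · intro u hu v hv
      exact (not_adj_iff_adjF u v).mpr
        (h5 _ (Finset.mem_map_of_mem _ hu) _ (Finset.mem_map_of_mem _ hv))
    · intro u hu
      rw [← hcardfilter T u]
      exact h6 _ (Finset.mem_map_of_mem _ hu)
    · intro v hv
      rw [← hcardfilter' S v]
      exact h7 _ (Finset.mem_map_of_mem _ hv)

/-! ### Enumeration of independent sets of size at most 6 -/

/-- Enumeration state: `(set, bitmask of the set, cardinality)`.  All pruning
tests are done on the cheap `Nat` components. -/
def ext6 : List (Fin 27) → List (Finset (Fin 27) × Nat × Nat)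
  | [] => [(∅, 0, 0)]
  | v :: vs =>
    let prev := ext6 vs
    prev ++ (prev.filter fun p => p.2.2 < 6 && (p.2.1 &&& (nbrTable.getD v.val 0) == 0)).map
      (fun p => (insert v p.1, p.2.1 ||| (1 <<< v.val), p.2.2 + 1))

/-- The bitmask invariant. -/
def GoodMask (s : Finset (Fin 27)) (m : Nat) : Prop :=
  ∀ k : Nat, m.testBit k = true ↔ ∃ h : k < 27, (⟨k, h⟩ : Fin 27) ∈ s

lemma mem_ext6 (l : List (Fin 27)) (s : Finset (Fin 27)) (hcard : s.card ≤ 6)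
    (hsub : ∀ x ∈ s, x ∈ l) (hind : ∀ u ∈ s, ∀ v ∈ s, adjF u v = false) :
    ∃ m : Nat, GoodMask s m ∧ (s, m, s.card) ∈ ext6 l := by
  induction l generalizing s with
  | nil =>
    have hs : s = ∅ := Finset.eq_empty_of_forall_notMem (fun x hx => by simpa using hsub x hx)
    subst hs
    refine ⟨0, fun k => by simp [Nat.zero_testBit], ?_⟩
    simp [ext6]
  | cons v vs ih =>
    by_cases hv : v ∈ s
    · have hcard0 : s.card ≠ 0 := Finset.card_ne_zero_of_mem hv
      have hce : (s.erase v).card = s.card - 1 := Finset.card_erase_of_mem hv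
      obtain ⟨m', hm', hmem'⟩ := ih (s.erase v)
        (by omega)
        (by
          intro x hx
          have hxs := Finset.mem_of_mem_erase hx
          have hxne := Finset.ne_of_mem_erase hx
          have := hsub x hxs
          simp only [List.mem_cons] at this
          exact this.resolve_left hxne)
        (fun a ha b hb =>
          hind a (Finset.mem_of_mem_erase ha) b (Finset.mem_of_mem_erase hb))
      refine ⟨m' ||| (1 <<< v.val), ?_, ?_⟩
      · intro k
        rw [Nat.testBit_lor, Bool.or_eq_true, hm' k]
        have hbit : (1 <<< v.val).testBit k = true ↔ k = v.val := by
          rw [Nat.one_shiftLeft, Nat.testBit_two_pow]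
          simp [eq_comm]
        rw [hbit]
        constructor
        · rintro (⟨h, hmem⟩ | rfl)
          · exact ⟨h, Finset.mem_of_mem_erase hmem⟩
          · exact ⟨v.isLt, by simpa using hv⟩
        · rintro ⟨h, hmem⟩
          by_cases hkv : k = v.val
          · exact Or.inr hkv
          · refine Or.inl ⟨h, Finset.mem_erase.mpr ⟨?_, hmem⟩⟩
            intro heq
            exact hkv (congrArg Fin.val heq)
      · show _ ∈ _ ++ _
        rw [List.mem_append]
        right
        rw [List.mem_map]
        refine ⟨(s.erase v, m', (s.erase v).card), ?_, ?_⟩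
        · rw [List.mem_filter]
          refine ⟨hmem', ?_⟩
          rw [Bool.and_eq_true, decide_eq_true_eq, beq_iff_eq]
          constructor
          · show (s.erase v).card < 6
            omega
          · show m' &&& nbrTable.getD v.val 0 = 0
            apply Nat.eq_of_testBit_eq
            intro i
            rw [Nat.testBit_land, Nat.zero_testBit]
            by_cases hb : m'.testBit i = true
            · obtain ⟨h, hmem⟩ := (hm' i).mp hb
              have : (nbrTable.getD v.val 0).testBit i = adjF v ⟨i, h⟩ := rfl
              rw [hb, this, hind v hv ⟨i, h⟩ (Finset.mem_of_mem_erase hmem)]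
              rfl
            · rw [Bool.not_eq_true] at hb
              rw [hb]
              rfl
        · have : (s.erase v).card + 1 = s.card := by omega
          rw [Finset.insert_erase hv, this]
    · obtain ⟨m, hm, hmem⟩ := ih s hcard
        (by
          intro x hx
          have := hsub x hx
          simp only [List.mem_cons] at this
          rcases this with h | h
          · exact absurd (h ▸ hx) hv
          · exact h)
        hind
      refine ⟨m, hm, ?_⟩
      show _ ∈ _ ++ _
      rw [List.mem_append]
      exact Or.inl hmem

def allFin : List (Fin 27) := List.finRange 27

def I6L : List (Finset (Fin 27) × Nat) :=
  ((ext6 allFin).filter fun p => p.2.2 == 6).map fun p => (p.1, p.2.1)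

def F27L : List (Finset (Fin 27) × Finset (Fin 27)) :=
  I6L.flatMap fun p =>
    (I6L.filter fun q => (p.2 &&& q.2 == 0) && decide (DSF p.1 q.1)).map fun q => (p.1, q.1)

def Fim : Finset (Finset (Finset (Fin 27))) :=
  (F27L.map fun p => ({p.1, p.2} : Finset (Finset (Fin 27)))).toFinset

lemma mem_I6L {A : Finset (Fin 27)} {m : Nat} (hc : A.card = 6)
    (hmem : (A, m, A.card) ∈ ext6 allFin) : (A, m) ∈ I6L := by
  rw [I6L, List.mem_map]
  refine ⟨(A, m, A.card), ?_, rfl⟩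
  rw [List.mem_filter]
  exact ⟨hmem, by simpa using hc⟩

def embL : Finset (Fin 27) ↪ Finset Line27 :=
  ⟨fun A => A.map eEmb', fun A B h => Finset.map_injective eEmb' h⟩

lemma embL_apply (A : Finset (Fin 27)) : embL A = A.map eEmb' := rfl

def embLL : Finset (Finset (Fin 27)) ↪ Finset (Finset Line27) :=
  ⟨fun Q => Q.map embL, fun Q R h => Finset.map_injective embL h⟩

def finalF : Finset (Finset (Finset Line27)) :=
  Fim.map embLL

lemma ne_of_DS {S T : Finset Line27} (h : DS S T) : S ≠ T := by
  intro heq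
  obtain ⟨h1, _, h3, _⟩ := h
  rw [heq] at h1 h3
  rw [disjoint_self] at h3
  rw [h3] at h1
  simp at h1

set_option maxRecDepth 1000000 in
set_option maxHeartbeats 50000000 in
lemma Fim_card : Fim.card = 36 := by decide

/-- There are exactly 36 double-sixes (as unordered pairs) among the 27 lines:
one of Schläfli's first type, fifteen of the second type and twenty of the
third type. -/
theorem thirty_six_double_sixes :
    {P : Finset (Finset Line27) |
      ∃ S T, P = {S, T} ∧ S ≠ T ∧ IsDoubleSix S T}.ncard = 36 := by
  have hset : {P : Finset (Finset Line27) |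
      ∃ S T, P = {S, T} ∧ S ≠ T ∧ IsDoubleSix S T} = ↑finalF := by
    ext P
    simp only [Set.mem_setOf_eq, Finset.mem_coe]
    constructor
    · rintro ⟨S, T, rfl, hne, hds⟩
      have hDS : DS S T := (isDoubleSix_iff_DS S T).mp hds
      have hDSF : DSF (S.map eEmb) (T.map eEmb) := (DS_iff_DSF S T).mp hDS
      obtain ⟨k1, k2, k3, k4, k5, k6, k7⟩ := hDSF
      obtain ⟨mS, hmS, hmemS⟩ := mem_ext6 allFin (S.map eEmb) (le_of_eq k1)
        (fun x _ => List.mem_finRange x) k4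
      obtain ⟨mT, hmT, hmemT⟩ := mem_ext6 allFin (T.map eEmb) (le_of_eq k2)
        (fun x _ => List.mem_finRange x) k5
      rw [k1] at hmemS
      rw [k2] at hmemT
      have hS : (S.map eEmb, mS) ∈ I6L := mem_I6L k1 (by rw [k1]; exact hmemS)
      have hT : (T.map eEmb, mT) ∈ I6L := mem_I6L k2 (by rw [k2]; exact hmemT)
      have hmaskdisj : mS &&& mT = 0 := by
        apply Nat.eq_of_testBit_eq
        intro i
        rw [Nat.testBit_land, Nat.zero_testBit]
        by_cases hb : mS.testBit i = true
        · obtain ⟨h, hmem⟩ := (hmS i).mp hb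
          have : mT.testBit i = false := by
            rw [← Bool.not_eq_true]
            intro hbt
            obtain ⟨h', hmem'⟩ := (hmT i).mp hbt
            exact (Finset.disjoint_left.mp k3) hmem hmem'
          rw [hb, this]
          rfl
        · rw [Bool.not_eq_true] at hb
          rw [hb]
          rfl
      have hp : (S.map eEmb, T.map eEmb) ∈ F27L := by
        rw [F27L, List.mem_flatMap]
        refine ⟨(S.map eEmb, mS), hS, ?_⟩
        rw [List.mem_map]
        refine ⟨(T.map eEmb, mT), ?_, rfl⟩
        rw [List.mem_filter]
        refine ⟨hT, ?_⟩
        rw [Bool.and_eq_true, beq_iff_eq, decide_eq_true_eq]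
        exact ⟨hmaskdisj, k1, k2, k3, k4, k5, k6, k7⟩
      have hq : ({S.map eEmb, T.map eEmb} : Finset (Finset (Fin 27))) ∈ Fim := by
        rw [Fim, List.mem_toFinset, List.mem_map]
        exact ⟨(S.map eEmb, T.map eEmb), hp, rfl⟩
      simp only [finalF, Finset.mem_map]
      refine ⟨{S.map eEmb, T.map eEmb}, hq, ?_⟩
      show Finset.map embL _ = _
      rw [Finset.map_insert, Finset.map_singleton, embL_apply, embL_apply,
        map_map_eq, map_map_eq]
    · intro hP
      simp only [finalF, Finset.mem_map] at hP
      obtain ⟨Q, hQ, rfl⟩ := hP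
      rw [Fim, List.mem_toFinset, List.mem_map] at hQ
      obtain ⟨p, hp, rfl⟩ := hQ
      rw [F27L, List.mem_flatMap] at hp
      obtain ⟨a, _, hmem⟩ := hp
      rw [List.mem_map] at hmem
      obtain ⟨b, hb, heq⟩ := hmem
      rw [List.mem_filter, Bool.and_eq_true, decide_eq_true_eq] at hb
      have hDSF : DSF p.1 p.2 := by
        rw [← heq]
        exact hb.2.2
      set S := p.1.map eEmb' with hSdef
      set T := p.2.map eEmb' with hTdef
      have hS1 : S.map eEmb = p.1 := map_map_eq' p.1
      have hT1 : T.map eEmb = p.2 := map_map_eq' p.2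
      have hDS : DS S T := by
        rw [DS_iff_DSF, hS1, hT1]
        exact hDSF
      refine ⟨S, T, ?_, ne_of_DS hDS, (isDoubleSix_iff_DS S T).mpr hDS⟩
      show Finset.map embL _ = _
      rw [Finset.map_insert, Finset.map_singleton, embL_apply, embL_apply]
  rw [hset, Set.ncard_coe_finset]
  simp only [finalF]
  rw [Finset.card_map, Fim_card]
end
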